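/- In the variable widget of the BSP_r construction (components P_{x_i}, P_{x̄_i} with send vertices s_{x_i}, t_{x_i} and s_{x̄_i}, t_{x̄_i}, and arbitrator component Q_i with receive vertices q_i, r_{x_i}, r_{x̄_i}, where Q_i has exactly one token and the other components none), any colouring sequence may colour at most one of the two vertices t_{x_i}, t_{x̄_i} yellow before vertex q_i is coloured green. -/

import Mathlib

/-! Formal framework: communication graphs and the red/yellow/green colouring game
(Brodsky–Pedersen–Wagner, "On the Complexity of Buffer Allocation in Message Passing Systems"),
with receive-side token pools. -/

inductive Colour : Type
  | red | yellow | green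
deriving DecidableEq

/-- A communication graph: vertices are partitioned into start/send/receive/end vertices,
`pred u v` means `u` is the component predecessor of `v` (a process arc `u → v`),
`matched u v` is a communication arc from send `u` to its matching receive `v`,
`comp v` is the index of the process component of `v`, and `pos v` is the position
of `v` within its component chain. -/
structure CommGraph (V : Type) where
  isStart : V → Prop
  isSend : V → Prop
  isRecv : V → Prop
  isEnd : V → Prop
  pred : V → V → Prop
  matched : V → V → Prop
  comp : V → ℕ
  pos : V → ℕ

namespace CommGraph

variable {V : Type}

/-- An arc of the communication graph (process arc or communication arc). -/
def GArc (G : CommGraph V) (u v : V) : Prop := G.pred u v ∨ G.matched u v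

/-- Well-formedness of a communication graph: the vertex kinds partition `V`,
components are chains (unique predecessors, positions increase along process arcs),
communication arcs go from sends to receives in different components and form a
partial matching, and the graph is acyclic (arcs admit no infinite descent). -/
structure WF (G : CommGraph V) : Prop where
  kinds : ∀ v, G.isStart v ∨ G.isSend v ∨ G.isRecv v ∨ G.isEnd v
  start_not_send : ∀ v, G.isStart v → ¬ G.isSend v
  start_not_recv : ∀ v, G.isStart v → ¬ G.isRecv v
  start_not_end : ∀ v, G.isStart v → ¬ G.isEnd v
  send_not_recv : ∀ v, G.isSend v → ¬ G.isRecv v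
  send_not_end : ∀ v, G.isSend v → ¬ G.isEnd v
  recv_not_end : ∀ v, G.isRecv v → ¬ G.isEnd v
  pred_unique : ∀ {u u' v}, G.pred u v → G.pred u' v → u = u'
  pred_comp : ∀ {u v}, G.pred u v → G.comp u = G.comp v
  pred_pos : ∀ {u v}, G.pred u v → G.pos v = G.pos u + 1
  start_no_pred : ∀ {u v}, G.pred u v → ¬ G.isStart v
  has_pred : ∀ v, ¬ G.isStart v → ∃ u, G.pred u v
  matched_send : ∀ {u v}, G.matched u v → G.isSend u
  matched_recv : ∀ {u v}, G.matched u v → G.isRecv v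
  matched_comp : ∀ {u v}, G.matched u v → G.comp u ≠ G.comp v
  matched_unique_left : ∀ {u u' v}, G.matched u v → G.matched u' v → u = u'
  matched_unique_right : ∀ {u v v'}, G.matched u v → G.matched u v' → v = v'
  send_has_match : ∀ v, G.isSend v → ∃ w, G.matched v w
  recv_has_match : ∀ v, G.isRecv v → ∃ w, G.matched w v
  dag : WellFounded fun u v => G.GArc u v

end CommGraph

/-- A state of the colouring game: the colouring, which receive vertices currently
hold a token on their incident communication arc, and the number of available
tokens in each (per-process, receive-side) pool. -/
structure St (V : Type) where
  col : V → Colour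
  tok : V → Bool
  pool : ℕ → ℕ

/-- The names of the colouring rules. -/
inductive Rule : Type
  | sendYel | recvYel | recvYelTok | sendGrn | recvGrn | endYel | endGrn
deriving DecidableEq

variable {V : Type}

/-- One move of the colouring game (receive-side buffering: the token used by the
buffered-receive rule `recvYelTok` comes from the pool of the receiving component,
and is returned when the receive turns green). -/
inductive Step [DecidableEq V] (G : CommGraph V) : Rule → St V → St V → Prop
  | sendYel {s : St V} {v u : V} :
      G.isSend v → s.col v = .red → G.pred u v → s.col u = .green →
      Step G .sendYel s ⟨Function.update s.col v .yellow, s.tok, s.pool⟩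
  | recvYel {s : St V} {v u w : V} :
      G.isRecv v → s.col v = .red → G.matched w v → s.col w = .yellow →
      G.pred u v → s.col u = .green →
      Step G .recvYel s ⟨Function.update s.col v .yellow, s.tok, s.pool⟩
  | recvYelTok {s : St V} {v w : V} :
      G.isRecv v → s.col v = .red → G.matched w v → s.col w = .yellow →
      0 < s.pool (G.comp v) →
      Step G .recvYelTok s ⟨Function.update s.col v .yellow,
        Function.update s.tok v true,
        Function.update s.pool (G.comp v) (s.pool (G.comp v) - 1)⟩
  | sendGrn {s : St V} {v r : V} :
      G.isSend v → s.col v = .yellow → G.matched v r → s.col r = .yellow →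
      Step G .sendGrn s ⟨Function.update s.col v .green, s.tok, s.pool⟩
  | recvGrn {s : St V} {v u w : V} :
      G.isRecv v → s.col v = .yellow → G.pred u v → s.col u = .green →
      G.matched w v → s.col w = .green →
      Step G .recvGrn s ⟨Function.update s.col v .green,
        Function.update s.tok v false,
        if s.tok v then
          Function.update s.pool (G.comp v) (s.pool (G.comp v) + 1)
        else s.pool⟩
  | endYel {s : St V} {v u : V} :
      G.isEnd v → s.col v = .red → G.pred u v → s.col u = .green →
      Step G .endYel s ⟨Function.update s.col v .yellow, s.tok, s.pool⟩
  | endGrn {s : St V} {v : V} :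
      G.isEnd v → s.col v = .yellow →
      Step G .endGrn s ⟨Function.update s.col v .green, s.tok, s.pool⟩

/-- `IsSeq G s l` : the list `l` of (rule, state) pairs is a valid colouring sequence
starting from state `s`. -/
def IsSeq [DecidableEq V] (G : CommGraph V) : St V → List (Rule × St V) → Prop
  | _, [] => True
  | s, p :: l => Step G p.1 s p.2 ∧ IsSeq G p.2 l

/-- The list of states visited by a colouring sequence. -/
def states (s0 : St V) (l : List (Rule × St V)) : List (St V) :=
  s0 :: l.map Prod.snd

/-- The final state of a colouring sequence. -/
def finalSt (s0 : St V) (l : List (Rule × St V)) : St V :=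
  (states s0 l).getLast (by simp [states])

open Classical in
/-- The initial state: start vertices green, all others red, no tokens placed,
token pools given by the token assignment `B` (pool of component `i` holds `B i`). -/
noncomputable def init (G : CommGraph V) (B : ℕ → ℕ) : St V :=
  ⟨fun v => if G.isStart v then Colour.green else Colour.red, fun _ => false, B⟩

/-- A state from which no colouring rule applies. -/
def MaximalFrom [DecidableEq V] (G : CommGraph V) (s : St V) : Prop :=
  ∀ ρ t, ¬ Step G ρ s t

/-- A state is complete when every vertex is green. -/
def Completes (s : St V) : Prop := ∀ v, s.col v = Colour.green

/-- A deadlocking colouring sequence from `s0`: a maximal sequence whose final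
colouring has a non-green vertex. -/
def Deadlocks [DecidableEq V] (G : CommGraph V) (s0 : St V) (l : List (Rule × St V)) : Prop :=
  IsSeq G s0 l ∧ MaximalFrom G (finalSt s0 l) ∧ ¬ Completes (finalSt s0 l)

/-- The system is safe (deadlock free) under token assignment `B`:
every maximal colouring sequence completes. -/
def DeadlockFree [DecidableEq V] (G : CommGraph V) (B : ℕ → ℕ) : Prop :=
  ∀ l, IsSeq G (init G B) l → MaximalFrom G (finalSt (init G B) l) →
    Completes (finalSt (init G B) l)

/-- A state blocks: some yellow send has a matching red receive to which the
buffered-receive rule cannot be applied (no token available). -/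
def Blocked (G : CommGraph V) (s : St V) : Prop :=
  ∃ v r, G.matched v r ∧ s.col v = Colour.yellow ∧ s.col r = Colour.red ∧
    s.pool (G.comp r) = 0

/-- The graph is block free under token assignment `B`: no colouring sequence blocks. -/
def BlockFree [DecidableEq V] (G : CommGraph V) (B : ℕ → ℕ) : Prop :=
  ∀ l, IsSeq G (init G B) l → ¬ Blocked G (finalSt (init G B) l)


section AuxWidget

variable {V : Type} [DecidableEq V]

/-- Count of a colour: 0 while red, 1 once it has ever been coloured. -/
def cnt : Colour → ℕ
  | Colour.red => 0
  | _ => 1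

lemma cnt_ne_red {c : Colour} (h : c ≠ Colour.red) : cnt c = 1 := by
  cases c <;> simp [cnt] at h ⊢

/-- The key invariant of the variable widget. -/
def WInv (G : CommGraph V) (q rx rx' sx tx sx' tx' : V) (s : St V) : Prop :=
  s.col q = Colour.green ∨
    (s.col rx ≠ Colour.green ∧ s.col rx' ≠ Colour.green ∧
     s.pool (G.comp q) + cnt (s.col rx) + cnt (s.col rx') ≤ 1 ∧
     (s.col tx ≠ Colour.red → s.col sx = Colour.green) ∧
     (s.col sx = Colour.green → s.col rx ≠ Colour.red) ∧
     (s.col tx' ≠ Colour.red → s.col sx' = Colour.green) ∧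
     (s.col sx' = Colour.green → s.col rx' ≠ Colour.red))

lemma upd_green_of_red {f : V → Colour} {v w : V} (hc : f v = Colour.red)
    (hg : f w = Colour.green) (c : Colour) : Function.update f v c w = Colour.green := by
  rcases eq_or_ne w v with rfl | h
  · rw [hc] at hg; cases hg
  · rw [Function.update_of_ne h]; exact hg

lemma upd_green_of_yel {f : V → Colour} {v w : V} (hc : f v = Colour.yellow)
    (hg : f w = Colour.green) (c : Colour) : Function.update f v c w = Colour.green := by
  rcases eq_or_ne w v with rfl | h
  · rw [hc] at hg; cases hg
  · rw [Function.update_of_ne h]; exact hg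

lemma upd_green_green {f : V → Colour} {v w : V} (hg : f w = Colour.green) :
    Function.update f v Colour.green w = Colour.green := by
  rcases eq_or_ne w v with rfl | h
  · rw [Function.update_self]
  · rw [Function.update_of_ne h]; exact hg

/-- Green vertices stay green under any step. -/
lemma green_persists (G : CommGraph V) {ρ : Rule} {s t : St V}
    (h : Step G ρ s t) (w : V) (hg : s.col w = Colour.green) :
    t.col w = Colour.green := by
  cases h with
  | sendYel hv hc hp hg' => exact upd_green_of_red hc hg _
  | recvYel hv hc hm hw hp hg' => exact upd_green_of_red hc hg _
  | recvYelTok hv hc hm hw hp => exact upd_green_of_red hc hg _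
  | sendGrn hv hc hm hr => exact upd_green_green hg
  | recvGrn hv hc hp hu hm hw => exact upd_green_green hg
  | endYel hv hc hp hg' => exact upd_green_of_red hc hg _
  | endGrn hv hc => exact upd_green_of_yel hc hg _

lemma step_inv (G : CommGraph V) (hwf : G.WF)
    (sx tx sx' tx' q rx rx' : V)
    (hp2 : G.pred sx tx) (hp4 : G.pred sx' tx')
    (hq2 : G.pred q rx) (hq3 : G.pred rx rx')
    (hsx : G.isSend sx) (htx : G.isSend tx) (hsx' : G.isSend sx') (htx' : G.isSend tx')
    (hqr : G.isRecv q) (hrx : G.isRecv rx) (hrx' : G.isRecv rx')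
    (hm1 : G.matched sx rx) (hm2 : G.matched sx' rx')
    (honly : ∀ v, G.isRecv v → G.comp v = G.comp q → v = q ∨ v = rx ∨ v = rx')
    (hcomp : G.comp sx ≠ G.comp sx')
    {ρ : Rule} {s t : St V} (hstep : Step G ρ s t)
    (hinv : WInv G q rx rx' sx tx sx' tx' s) : WInv G q rx rx' sx tx sx' tx' t := by
  -- component facts
  have hcqr : G.comp q = G.comp rx := hwf.pred_comp hq2
  have hcqr' : G.comp q = G.comp rx' := (hwf.pred_comp hq2).trans (hwf.pred_comp hq3)
  have hcsxq : G.comp sx ≠ G.comp q := fun h => hwf.matched_comp hm1 (h.trans hcqr)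
  have hcsx'q : G.comp sx' ≠ G.comp q := fun h => hwf.matched_comp hm2 (h.trans hcqr')
  have hcst : G.comp sx = G.comp tx := hwf.pred_comp hp2
  have hcst' : G.comp sx' = G.comp tx' := hwf.pred_comp hp4
  -- distinctness: sends vs recvs
  have sne : ∀ a b : V, G.isSend a → G.isRecv b → a ≠ b := by
    rintro a b ha hb rfl; exact hwf.send_not_recv a ha hb
  have nsxq := sne sx q hsx hqr
  have nsxrx := sne sx rx hsx hrx
  have nsxrx' := sne sx rx' hsx hrx'
  have ntxq := sne tx q htx hqr
  have ntxrx := sne tx rx htx hrx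
  have ntxrx' := sne tx rx' htx hrx'
  have nsx'q := sne sx' q hsx' hqr
  have nsx'rx := sne sx' rx hsx' hrx
  have nsx'rx' := sne sx' rx' hsx' hrx'
  have ntx'q := sne tx' q htx' hqr
  have ntx'rx := sne tx' rx htx' hrx
  have ntx'rx' := sne tx' rx' htx' hrx'
  -- distinctness by position
  have nqrx : q ≠ rx := by
    intro h; have := hwf.pred_pos hq2; rw [h] at this; omega
  have nqrx' : q ≠ rx' := by
    intro h
    have h1 := hwf.pred_pos hq2; have h2 := hwf.pred_pos hq3
    rw [h] at h1; omega
  have nrxrx' : rx ≠ rx' := by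
    intro h; have := hwf.pred_pos hq3; rw [h] at this; omega
  have nsxtx : sx ≠ tx := by
    intro h; have := hwf.pred_pos hp2; rw [h] at this; omega
  have nsx'tx' : sx' ≠ tx' := by
    intro h; have := hwf.pred_pos hp4; rw [h] at this; omega
  -- distinctness by component
  have nsxsx' : sx ≠ sx' := fun h => hcomp (by rw [h])
  have nsxtx' : sx ≠ tx' := fun h => hcomp (by rw [h, ← hcst'])
  have ntxsx' : tx ≠ sx' := fun h => hcomp (by rw [hcst, h])
  have ntxtx' : tx ≠ tx' := fun h => hcomp (by rw [hcst, h, ← hcst'])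
  by_cases hqg : s.col q = Colour.green
  · exact Or.inl (green_persists G hstep q hqg)
  rcases hinv with hq | ⟨h1, h2, h3, h4, h5, h6, h7⟩
  · exact absurd hq hqg
  cases hstep with
  | @sendYel s v u hv hred hpu hug =>
    refine Or.inr ?_
    dsimp only
    have nvrx : rx ≠ v := fun h => sne v rx hv hrx h.symm
    have nvrx' : rx' ≠ v := fun h => sne v rx' hv hrx' h.symm
    have crx : Function.update s.col v Colour.yellow rx = s.col rx :=
      Function.update_of_ne nvrx _ _
    have crx' : Function.update s.col v Colour.yellow rx' = s.col rx' :=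
      Function.update_of_ne nvrx' _ _
    refine ⟨by simpa [crx] using h1, by simpa [crx'] using h2,
      by simpa [crx, crx'] using h3, ?_, ?_, ?_, ?_⟩
    · -- tx clause
      by_cases hvtx : v = tx
      · have hsxv : sx ≠ v := by rw [hvtx]; exact nsxtx
        have husx : u = sx := hwf.pred_unique hpu (show G.pred sx v by rw [hvtx]; exact hp2)
        intro _
        rw [Function.update_of_ne hsxv, ← husx]
        exact hug
      by_cases hvsx : v = sx
      · have htxv : tx ≠ v := by rw [hvsx]; exact Ne.symm nsxtx
        rw [Function.update_of_ne htxv]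
        intro hcl
        exact absurd (h4 hcl) (by rw [← hvsx, hred]; simp)
      · rw [Function.update_of_ne (fun h : tx = v => hvtx h.symm),
          Function.update_of_ne (fun h : sx = v => hvsx h.symm)]
        exact h4
    · by_cases hvsx : v = sx
      · rw [← hvsx, Function.update_self]
        intro hcl; cases hcl
      · rw [Function.update_of_ne (fun h : sx = v => hvsx h.symm), crx]
        exact h5
    · by_cases hvtx : v = tx'
      · have hsxv : sx' ≠ v := by rw [hvtx]; exact nsx'tx'
        have husx : u = sx' := hwf.pred_unique hpu (show G.pred sx' v by rw [hvtx]; exact hp4)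
        intro _
        rw [Function.update_of_ne hsxv, ← husx]
        exact hug
      by_cases hvsx : v = sx'
      · have htxv : tx' ≠ v := by rw [hvsx]; exact Ne.symm nsx'tx'
        rw [Function.update_of_ne htxv]
        intro hcl
        exact absurd (h6 hcl) (by rw [← hvsx, hred]; simp)
      · rw [Function.update_of_ne (fun h : tx' = v => hvtx h.symm),
          Function.update_of_ne (fun h : sx' = v => hvsx h.symm)]
        exact h6
    · by_cases hvsx : v = sx'
      · rw [← hvsx, Function.update_self]
        intro hcl; cases hcl
      · rw [Function.update_of_ne (fun h : sx' = v => hvsx h.symm), crx']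
        exact h7
  | @recvYel s v u w hv hred hmw hwy hpu hug =>
    refine Or.inr ?_
    dsimp only
    have nvrx : rx ≠ v := by
      rintro rfl
      exact hqg (by rw [← hwf.pred_unique hpu hq2]; exact hug)
    have nvrx' : rx' ≠ v := by
      rintro rfl
      exact h1 (by rw [← hwf.pred_unique hpu hq3]; exact hug)
    have csx : ∀ c, Function.update s.col v c sx = s.col sx := fun c =>
      Function.update_of_ne (sne sx v hsx hv) _ _
    have ctx : ∀ c, Function.update s.col v c tx = s.col tx := fun c =>
      Function.update_of_ne (sne tx v htx hv) _ _
    have csx' : ∀ c, Function.update s.col v c sx' = s.col sx' := fun c =>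
      Function.update_of_ne (sne sx' v hsx' hv) _ _
    have ctx' : ∀ c, Function.update s.col v c tx' = s.col tx' := fun c =>
      Function.update_of_ne (sne tx' v htx' hv) _ _
    have crx : Function.update s.col v Colour.yellow rx = s.col rx :=
      Function.update_of_ne nvrx _ _
    have crx' : Function.update s.col v Colour.yellow rx' = s.col rx' :=
      Function.update_of_ne nvrx' _ _
    exact ⟨by simpa [crx] using h1, by simpa [crx'] using h2,
      by simpa [crx, crx'] using h3,
      by simpa [ctx, csx] using h4, by simpa [csx, crx] using h5,
      by simpa [ctx', csx'] using h6, by simpa [csx', crx'] using h7⟩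
  | @recvYelTok s v w hv hred hmw hwy hpos =>
    refine Or.inr ?_
    dsimp only
    have csx : ∀ c, Function.update s.col v c sx = s.col sx := fun c =>
      Function.update_of_ne (sne sx v hsx hv) _ _
    have ctx : ∀ c, Function.update s.col v c tx = s.col tx := fun c =>
      Function.update_of_ne (sne tx v htx hv) _ _
    have csx' : ∀ c, Function.update s.col v c sx' = s.col sx' := fun c =>
      Function.update_of_ne (sne sx' v hsx' hv) _ _
    have ctx' : ∀ c, Function.update s.col v c tx' = s.col tx' := fun c =>
      Function.update_of_ne (sne tx' v htx' hv) _ _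
    by_cases hc : G.comp v = G.comp q
    · have hpool : Function.update s.pool (G.comp v)
          (s.pool (G.comp v) - 1) (G.comp q) = s.pool (G.comp q) - 1 := by
        rw [hc, Function.update_self]
      have hposq : 0 < s.pool (G.comp q) := by rw [← hc]; exact hpos
      rcases honly v hv hc with hveq | hveq | hveq
      · -- v = q
        have crx : Function.update s.col v Colour.yellow rx = s.col rx :=
          Function.update_of_ne (by rw [hveq]; exact Ne.symm nqrx) _ _
        have crx' : Function.update s.col v Colour.yellow rx' = s.col rx' :=
          Function.update_of_ne (by rw [hveq]; exact Ne.symm nqrx') _ _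
        refine ⟨by simpa [crx] using h1, by simpa [crx'] using h2, ?_,
          by simpa [ctx, csx] using h4, by simpa [csx, crx] using h5,
          by simpa [ctx', csx'] using h6, by simpa [csx', crx'] using h7⟩
        rw [hpool, crx, crx']
        omega
      · -- v = rx
        have crx : Function.update s.col v Colour.yellow rx = Colour.yellow := by
          rw [hveq]; exact Function.update_self _ _ _
        have crx' : Function.update s.col v Colour.yellow rx' = s.col rx' :=
          Function.update_of_ne (by rw [hveq]; exact Ne.symm nrxrx') _ _
        refine ⟨by rw [crx]; simp, by simpa [crx'] using h2, ?_,
          by simpa [ctx, csx] using h4, by rw [crx]; intro _; simp,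
          by simpa [ctx', csx'] using h6, by simpa [csx', crx'] using h7⟩
        rw [hpool, crx, crx']
        have hc0 : cnt (s.col rx) = 0 := by rw [← hveq, hred]; rfl
        rw [hc0] at h3
        have hc1 : cnt Colour.yellow = 1 := rfl
        rw [hc1]
        omega
      · -- v = rx'
        have crx' : Function.update s.col v Colour.yellow rx' = Colour.yellow := by
          rw [hveq]; exact Function.update_self _ _ _
        have crx : Function.update s.col v Colour.yellow rx = s.col rx :=
          Function.update_of_ne (by rw [hveq]; exact nrxrx') _ _
        refine ⟨by simpa [crx] using h1, by rw [crx']; simp, ?_,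
          by simpa [ctx, csx] using h4, by simpa [csx, crx] using h5,
          by simpa [ctx', csx'] using h6, by rw [crx']; intro _; simp⟩
        rw [hpool, crx, crx']
        have hc0 : cnt (s.col rx') = 0 := by rw [← hveq, hred]; rfl
        rw [hc0] at h3
        have hc1 : cnt Colour.yellow = 1 := rfl
        rw [hc1]
        omega
    · have nvrx : rx ≠ v := by
        rintro rfl; exact hc hcqr.symm
      have nvrx' : rx' ≠ v := by
        rintro rfl; exact hc hcqr'.symm
      have crx : Function.update s.col v Colour.yellow rx = s.col rx :=
        Function.update_of_ne nvrx _ _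
      have crx' : Function.update s.col v Colour.yellow rx' = s.col rx' :=
        Function.update_of_ne nvrx' _ _
      have hpool : Function.update s.pool (G.comp v)
          (s.pool (G.comp v) - 1) (G.comp q) = s.pool (G.comp q) :=
        Function.update_of_ne (fun h => hc h.symm) _ _
      exact ⟨by simpa [crx] using h1, by simpa [crx'] using h2,
        by simpa [hpool, crx, crx'] using h3,
        by simpa [ctx, csx] using h4, by simpa [csx, crx] using h5,
        by simpa [ctx', csx'] using h6, by simpa [csx', crx'] using h7⟩
  | @sendGrn s v r hv hyel hmr hr =>
    refine Or.inr ?_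
    dsimp only
    have nvrx : rx ≠ v := fun h => sne v rx hv hrx h.symm
    have nvrx' : rx' ≠ v := fun h => sne v rx' hv hrx' h.symm
    have crx : Function.update s.col v Colour.green rx = s.col rx :=
      Function.update_of_ne nvrx _ _
    have crx' : Function.update s.col v Colour.green rx' = s.col rx' :=
      Function.update_of_ne nvrx' _ _
    refine ⟨by simpa [crx] using h1, by simpa [crx'] using h2,
      by simpa [crx, crx'] using h3, ?_, ?_, ?_, ?_⟩
    · by_cases hvtx : v = tx
      · have hsxv : sx ≠ v := by rw [hvtx]; exact nsxtx
        intro _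
        rw [Function.update_of_ne hsxv]
        exact h4 (by rw [← hvtx, hyel]; simp)
      by_cases hvsx : v = sx
      · intro _
        rw [← hvsx, Function.update_self]
      · rw [Function.update_of_ne (fun h : tx = v => hvtx h.symm),
          Function.update_of_ne (fun h : sx = v => hvsx h.symm)]
        exact h4
    · by_cases hvsx : v = sx
      · intro _
        have hrrx : r = rx := hwf.matched_unique_right (show G.matched sx r by rw [← hvsx]; exact hmr) hm1
        rw [crx, ← hrrx, hr]; simp
      · rw [Function.update_of_ne (fun h : sx = v => hvsx h.symm), crx]
        exact h5
    · by_cases hvtx : v = tx'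
      · have hsxv : sx' ≠ v := by rw [hvtx]; exact nsx'tx'
        intro _
        rw [Function.update_of_ne hsxv]
        exact h6 (by rw [← hvtx, hyel]; simp)
      by_cases hvsx : v = sx'
      · intro _
        rw [← hvsx, Function.update_self]
      · rw [Function.update_of_ne (fun h : tx' = v => hvtx h.symm),
          Function.update_of_ne (fun h : sx' = v => hvsx h.symm)]
        exact h6
    · by_cases hvsx : v = sx'
      · intro _
        have hrrx : r = rx' := hwf.matched_unique_right (show G.matched sx' r by rw [← hvsx]; exact hmr) hm2
        rw [crx', ← hrrx, hr]; simp
      · rw [Function.update_of_ne (fun h : sx' = v => hvsx h.symm), crx']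
        exact h7
  | @recvGrn s v u w hv hyel hpu hug hmw hwg =>
    by_cases hvq : v = q
    · subst hvq
      exact Or.inl (Function.update_self _ _ _)
    refine Or.inr ?_
    dsimp only
    have nvrx : rx ≠ v := by
      rintro rfl
      exact hqg (by rw [← hwf.pred_unique hpu hq2]; exact hug)
    have nvrx' : rx' ≠ v := by
      rintro rfl
      exact h1 (by rw [← hwf.pred_unique hpu hq3]; exact hug)
    have csx : ∀ c, Function.update s.col v c sx = s.col sx := fun c =>
      Function.update_of_ne (sne sx v hsx hv) _ _
    have ctx : ∀ c, Function.update s.col v c tx = s.col tx := fun c =>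
      Function.update_of_ne (sne tx v htx hv) _ _
    have csx' : ∀ c, Function.update s.col v c sx' = s.col sx' := fun c =>
      Function.update_of_ne (sne sx' v hsx' hv) _ _
    have ctx' : ∀ c, Function.update s.col v c tx' = s.col tx' := fun c =>
      Function.update_of_ne (sne tx' v htx' hv) _ _
    have crx : Function.update s.col v Colour.green rx = s.col rx :=
      Function.update_of_ne nvrx _ _
    have crx' : Function.update s.col v Colour.green rx' = s.col rx' :=
      Function.update_of_ne nvrx' _ _
    have hcv : G.comp v ≠ G.comp q := by
      intro h
      rcases honly v hv h with rfl | rfl | rfl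
      · exact hvq rfl
      · exact nvrx rfl
      · exact nvrx' rfl
    have hpool : (if s.tok v then
        Function.update s.pool (G.comp v) (s.pool (G.comp v) + 1)
        else s.pool) (G.comp q) = s.pool (G.comp q) := by
      split
      · exact Function.update_of_ne (fun h => hcv h.symm) _ _
      · rfl
    exact ⟨by simpa [crx] using h1, by simpa [crx'] using h2,
      by simpa [hpool, crx, crx'] using h3,
      by simpa [ctx, csx] using h4, by simpa [csx, crx] using h5,
      by simpa [ctx', csx'] using h6, by simpa [csx', crx'] using h7⟩
  | @endYel s v u hv hred hpu hug =>
    refine Or.inr ?_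
    dsimp only
    have ne1 : ∀ b : V, G.isSend b → b ≠ v := by
      rintro b hb rfl; exact hwf.send_not_end b hb hv
    have ne2 : ∀ b : V, G.isRecv b → b ≠ v := by
      rintro b hb rfl; exact hwf.recv_not_end b hb hv
    have crx := Function.update_of_ne (ne2 rx hrx) Colour.yellow s.col
    have crx' := Function.update_of_ne (ne2 rx' hrx') Colour.yellow s.col
    have csx := Function.update_of_ne (ne1 sx hsx) Colour.yellow s.col
    have ctx := Function.update_of_ne (ne1 tx htx) Colour.yellow s.col
    have csx' := Function.update_of_ne (ne1 sx' hsx') Colour.yellow s.col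
    have ctx' := Function.update_of_ne (ne1 tx' htx') Colour.yellow s.col
    exact ⟨by simpa [crx] using h1, by simpa [crx'] using h2,
      by simpa [crx, crx'] using h3,
      by simpa [ctx, csx] using h4, by simpa [csx, crx] using h5,
      by simpa [ctx', csx'] using h6, by simpa [csx', crx'] using h7⟩
  | @endGrn s v hv hyel =>
    refine Or.inr ?_
    dsimp only
    have ne1 : ∀ b : V, G.isSend b → b ≠ v := by
      rintro b hb rfl; exact hwf.send_not_end b hb hv
    have ne2 : ∀ b : V, G.isRecv b → b ≠ v := by
      rintro b hb rfl; exact hwf.recv_not_end b hb hv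
    have crx := Function.update_of_ne (ne2 rx hrx) Colour.green s.col
    have crx' := Function.update_of_ne (ne2 rx' hrx') Colour.green s.col
    have csx := Function.update_of_ne (ne1 sx hsx) Colour.green s.col
    have ctx := Function.update_of_ne (ne1 tx htx) Colour.green s.col
    have csx' := Function.update_of_ne (ne1 sx' hsx') Colour.green s.col
    have ctx' := Function.update_of_ne (ne1 tx' htx') Colour.green s.col
    exact ⟨by simpa [crx] using h1, by simpa [crx'] using h2,
      by simpa [crx, crx'] using h3,
      by simpa [ctx, csx] using h4, by simpa [csx, crx] using h5,
      by simpa [ctx', csx'] using h6, by simpa [csx', crx'] using h7⟩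

lemma inv_all_states (G : CommGraph V) (hwf : G.WF)
    (sx tx sx' tx' q rx rx' : V)
    (hp2 : G.pred sx tx) (hp4 : G.pred sx' tx')
    (hq2 : G.pred q rx) (hq3 : G.pred rx rx')
    (hsx : G.isSend sx) (htx : G.isSend tx) (hsx' : G.isSend sx') (htx' : G.isSend tx')
    (hqr : G.isRecv q) (hrx : G.isRecv rx) (hrx' : G.isRecv rx')
    (hm1 : G.matched sx rx) (hm2 : G.matched sx' rx')
    (honly : ∀ v, G.isRecv v → G.comp v = G.comp q → v = q ∨ v = rx ∨ v = rx')
    (hcomp : G.comp sx ≠ G.comp sx') :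
    ∀ l (s0 : St V), IsSeq G s0 l → WInv G q rx rx' sx tx sx' tx' s0 →
      ∀ st ∈ states s0 l, WInv G q rx rx' sx tx sx' tx' st := by
  intro l
  induction l with
  | nil =>
    intro s0 _ h0 st hst
    simp [states] at hst
    subst hst; exact h0
  | cons p l ih =>
    intro s0 hseq h0 st hst
    obtain ⟨hstep, hrest⟩ := hseq
    have hp2inv : WInv G q rx rx' sx tx sx' tx' p.2 :=
      step_inv G hwf sx tx sx' tx' q rx rx' hp2 hp4 hq2 hq3 hsx htx hsx' htx'
        hqr hrx hrx' hm1 hm2 honly hcomp hstep h0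
    simp only [states, List.map_cons, List.mem_cons] at hst
    rcases hst with rfl | hst
    · exact h0
    · exact ih p.2 hrest hp2inv st (by simpa [states] using hst)

end AuxWidget

/-- **Variable-widget property of the BSP_r construction.** In the widget with
components `P_x : start → s_x → t_x`, `P_x̄ : start → s_x̄ → t_x̄` and arbitrator
`Q : start → q → r_x → r_x̄` (arcs `(s_x, r_x)`, `(s_x̄, r_x̄)`, `q` matched to an
external send), where `Q`'s pool has exactly one token and the two variable
components have none, any colouring sequence may colour at most one of `t_x`,
`t_x̄` yellow before `q` is coloured green. -/
theorem bsp_variable_widget {V : Type} [DecidableEq V] [Fintype V]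
    (G : CommGraph V) (hwf : G.WF) (B : ℕ → ℕ)
    (stP stP' stQ sx tx sx' tx' q rx rx' sq : V)
    (hstP : G.isStart stP) (hstP' : G.isStart stP') (hstQ : G.isStart stQ)
    (hp1 : G.pred stP sx) (hp2 : G.pred sx tx)
    (hp3 : G.pred stP' sx') (hp4 : G.pred sx' tx')
    (hq1 : G.pred stQ q) (hq2 : G.pred q rx) (hq3 : G.pred rx rx')
    (hsx : G.isSend sx) (htx : G.isSend tx) (hsx' : G.isSend sx') (htx' : G.isSend tx')
    (hqr : G.isRecv q) (hrx : G.isRecv rx) (hrx' : G.isRecv rx')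
    (hm1 : G.matched sx rx) (hm2 : G.matched sx' rx') (hm3 : G.matched sq q)
    (honly : ∀ v, G.isRecv v → G.comp v = G.comp q → v = q ∨ v = rx ∨ v = rx')
    (hBq : B (G.comp q) = 1) (hBp : B (G.comp sx) = 0) (hBp' : B (G.comp sx') = 0)
    (hcomp : G.comp sx ≠ G.comp sx') :
    ∀ l, IsSeq G (init G B) l → ∀ st ∈ states (init G B) l,
      st.col q ≠ Colour.green → (st.col tx = Colour.red ∨ st.col tx' = Colour.red) := by
  intro l hseq st hst hqng
  have h0 : WInv G q rx rx' sx tx sx' tx' (init G B) := by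
    refine Or.inr ?_
    have hcolr : ∀ v : V, ¬ G.isStart v → (init G B).col v = Colour.red := by
      intro v hv
      simp only [init]
      exact if_neg hv
    have hrxred := hcolr rx (fun h => hwf.start_not_recv rx h hrx)
    have hrx'red := hcolr rx' (fun h => hwf.start_not_recv rx' h hrx')
    have hsxred := hcolr sx (fun h => hwf.start_not_send sx h hsx)
    have htxred := hcolr tx (fun h => hwf.start_not_send tx h htx)
    have hsx'red := hcolr sx' (fun h => hwf.start_not_send sx' h hsx')
    have htx'red := hcolr tx' (fun h => hwf.start_not_send tx' h htx')
    have hpool : (init G B).pool (G.comp q) = 1 := hBq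
    refine ⟨by rw [hrxred]; simp, by rw [hrx'red]; simp, ?_, ?_, ?_, ?_, ?_⟩
    · rw [hpool, hrxred, hrx'red]; simp [cnt]
    · intro h; exact absurd htxred h
    · intro h; rw [hsxred] at h; cases h
    · intro h; exact absurd htx'red h
    · intro h; rw [hsx'red] at h; cases h
  have hinv : WInv G q rx rx' sx tx sx' tx' st :=
    inv_all_states G hwf sx tx sx' tx' q rx rx' hp2 hp4 hq2 hq3 hsx htx hsx' htx'
      hqr hrx hrx' hm1 hm2 honly hcomp l (init G B) hseq h0 st hst
  rcases hinv with hq | ⟨h1, h2, h3, h4, h5, h6, h7⟩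
  · exact absurd hq hqng
  by_contra hcon
  push_neg at hcon
  obtain ⟨htxn, htx'n⟩ := hcon
  have hrxn : st.col rx ≠ Colour.red := h5 (h4 htxn)
  have hrx'n : st.col rx' ≠ Colour.red := h7 (h6 htx'n)
  rw [cnt_ne_red hrxn, cnt_ne_red hrx'n] at h3
  omega
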